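/- arXiv:1204.5164 — 9 statements merged into one kernel-verified Lean document; each statement's English description precedes it below -/
import Mathlib

section
/- Let H be a complex Hadamard matrix of order n whose rows include two rows u and v satisfying uᵢ² = vᵢ² for all i. For a unimodular complex number α, define H(α) by replacing, for every index i with uᵢ + vᵢ = 0, the entry uᵢ by α·uᵢ and vᵢ by α·vᵢ (all other entries unchanged). Then H(α) is a complex Hadamard matrix for every unimodular α. -/
open Matrix Complex

def IsCHM {n : ℕ} (H : Matrix (Fin n) (Fin n) ℂ) : Prop :=
  (∀ i j, ‖H i j‖ = 1) ∧ H * H.conjTranspose = (n : ℂ) • 1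

/-- Parametrizing a pair of rows `r, s` with `uᵢ² = vᵢ²`: multiply by `α` the entries of
rows `r` and `s` in those columns where `H r j + H s j = 0`. -/
noncomputable def rowPairParam {n : ℕ} (H : Matrix (Fin n) (Fin n) ℂ) (r s : Fin n)
    (α : ℂ) : Matrix (Fin n) (Fin n) ℂ :=
  fun i j => if (i = r ∨ i = s) ∧ H r j + H s j = 0 then α * H i j else H i j

theorem rowPairParam_isCHM {n : ℕ} (H : Matrix (Fin n) (Fin n) ℂ) (hH : IsCHM H)
    (r s : Fin n) (hrs : r ≠ s) (hsq : ∀ j, (H r j) ^ 2 = (H s j) ^ 2)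
    (α : ℂ) (hα : ‖α‖ = 1) :
    IsCHM (rowPairParam H r s α) := by
  obtain ⟨habs, horth⟩ := hH
  have hαα : α * (starRingEnd ℂ) α = 1 := by
    rw [Complex.mul_conj]
    norm_cast
    simp [← Complex.sq_norm, hα]
  have horth' : ∀ i k, ∑ j, H i j * (starRingEnd ℂ) (H k j)
      = if i = k then (n : ℂ) else 0 := by
    intro i k
    have h := congrFun (congrFun horth i) k
    simpa [Matrix.mul_apply, Matrix.conjTranspose_apply, Matrix.one_apply,
      Matrix.smul_apply] using h
  set S : Finset (Fin n) := Finset.univ.filter (fun j => H r j + H s j = 0) with hS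
  have hmemS : ∀ j, j ∈ S ↔ H r j + H s j = 0 := by
    intro j; simp [hS]
  have hpm : ∀ j, j ∉ S → H s j = H r j := by
    intro j hj
    have hne : H r j + H s j ≠ 0 := fun h => hj ((hmemS j).2 h)
    have h0 : (H r j - H s j) * (H r j + H s j) = 0 := by
      have := hsq j; ring_nf; linear_combination this
    rcases mul_eq_zero.1 h0 with h | h
    · exact (sub_eq_zero.1 h).symm
    · exact absurd h hne
  -- key vanishing lemma
  have keyr : ∀ k, k ≠ r → k ≠ s →
      ∑ j ∈ S, H r j * (starRingEnd ℂ) (H k j) = 0 := by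
    intro k hkr hks
    have h1 : ∑ j, (H r j + H s j) * (starRingEnd ℂ) (H k j) = 0 := by
      simp only [add_mul, Finset.sum_add_distrib]
      rw [horth' r k, horth' s k]
      simp [Ne.symm hkr, Ne.symm hks]
    have hsplit := Finset.sum_filter_add_sum_filter_not Finset.univ
      (fun j => H r j + H s j = 0)
      (fun j => (H r j + H s j) * (starRingEnd ℂ) (H k j))
    have hzeroS : ∑ j ∈ S, (H r j + H s j) * (starRingEnd ℂ) (H k j) = 0 :=
      Finset.sum_eq_zero fun j hj => by rw [(hmemS j).1 hj, zero_mul]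
    rw [hS] at hzeroS
    rw [hzeroS, zero_add, h1] at hsplit
    have hcompl2 : ∑ j ∈ Finset.univ.filter (fun j => ¬ (H r j + H s j = 0)),
        H r j * (starRingEnd ℂ) (H k j) = 0 := by
      have heq : ∑ j ∈ Finset.univ.filter (fun j => ¬ (H r j + H s j = 0)),
          (H r j + H s j) * (starRingEnd ℂ) (H k j)
          = 2 * ∑ j ∈ Finset.univ.filter (fun j => ¬ (H r j + H s j = 0)),
            H r j * (starRingEnd ℂ) (H k j) := by
        rw [Finset.mul_sum]
        apply Finset.sum_congr rfl
        intro j hj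
        have hj' : j ∉ S := by
          intro hmem
          have := (hmemS j).1 hmem
          simp only [Finset.mem_filter] at hj
          exact hj.2 this
        rw [hpm j hj']; ring
      rw [heq] at hsplit
      have h2 : (2 : ℂ) ≠ 0 := by norm_num
      exact (mul_eq_zero.1 hsplit).resolve_left h2
    have htot := horth' r k
    rw [if_neg (Ne.symm hkr)] at htot
    have hsplit2 := Finset.sum_filter_add_sum_filter_not Finset.univ
      (fun j => H r j + H s j = 0)
      (fun j => H r j * (starRingEnd ℂ) (H k j))
    rw [hcompl2, add_zero, htot] at hsplit2
    rw [hS]; exact hsplit2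
  have key : ∀ w k, (w = r ∨ w = s) → k ≠ r → k ≠ s →
      ∑ j ∈ S, H w j * (starRingEnd ℂ) (H k j) = 0 := by
    intro w k hw hkr hks
    rcases hw with rfl | rfl
    · exact keyr k hkr hks
    · have heq : ∑ j ∈ S, H w j * (starRingEnd ℂ) (H k j)
          = ∑ j ∈ S, -(H r j * (starRingEnd ℂ) (H k j)) := by
        apply Finset.sum_congr rfl
        intro j hj
        have h0 : H r j + H w j = 0 := (hmemS j).1 hj
        have hwj : H w j = - H r j := by linear_combination h0
        rw [hwj]; ring
      rw [heq, Finset.sum_neg_distrib, keyr k hkr hks, neg_zero]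
  have key2 : ∀ i w, (w = r ∨ w = s) → i ≠ r → i ≠ s →
      ∑ j ∈ S, H i j * (starRingEnd ℂ) (H w j) = 0 := by
    intro i w hw hir his
    have h := key w i hw hir his
    have := congrArg (starRingEnd ℂ) h
    rw [map_sum, map_zero] at this
    rw [← this]
    apply Finset.sum_congr rfl
    intro j _
    rw [_root_.map_mul, Complex.conj_conj]
    ring
  constructor
  · intro i j
    unfold rowPairParam
    split
    · rw [norm_mul, hα, habs, one_mul]
    · exact habs i j
  · ext i k
    rw [Matrix.mul_apply]
    simp only [Matrix.conjTranspose_apply, rowPairParam]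
    simp only [← starRingEnd_apply]
    have goal_rhs : ((n : ℂ) • (1 : Matrix (Fin n) (Fin n) ℂ)) i k
        = if i = k then (n : ℂ) else 0 := by
      simp [Matrix.one_apply]
    rw [goal_rhs, ← horth' i k]
    by_cases hi : i = r ∨ i = s
    · by_cases hk : k = r ∨ k = s
      · apply Finset.sum_congr rfl
        intro j _
        by_cases hc : H r j + H s j = 0
        · rw [if_pos ⟨hi, hc⟩, if_pos ⟨hk, hc⟩, _root_.map_mul]
          calc α * H i j * ((starRingEnd ℂ) α * (starRingEnd ℂ) (H k j))
              = (α * (starRingEnd ℂ) α) * (H i j * (starRingEnd ℂ) (H k j)) := by ring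
            _ = H i j * (starRingEnd ℂ) (H k j) := by rw [hαα, one_mul]
        · rw [if_neg (fun h => hc h.2), if_neg (fun h => hc h.2)]
      · push_neg at hk
        have hterm : ∀ j, (if (i = r ∨ i = s) ∧ H r j + H s j = 0 then α * H i j else H i j)
            * (starRingEnd ℂ) (if (k = r ∨ k = s) ∧ H r j + H s j = 0 then α * H k j else H k j)
            = H i j * (starRingEnd ℂ) (H k j)
              + (if H r j + H s j = 0 then (α - 1) * (H i j * (starRingEnd ℂ) (H k j)) else 0) := by
          intro j
          have hkneg : ¬ ((k = r ∨ k = s) ∧ H r j + H s j = 0) := by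
            rintro ⟨hk' | hk', _⟩
            · exact hk.1 hk'
            · exact hk.2 hk'
          rw [if_neg hkneg]
          by_cases hc : H r j + H s j = 0
          · rw [if_pos ⟨hi, hc⟩, if_pos hc]; ring
          · rw [if_neg (fun h => hc h.2), if_neg hc, add_zero]
        simp only [hterm]
        rw [Finset.sum_add_distrib, ← Finset.sum_filter, ← Finset.mul_sum, ← hS,
          key i k hi hk.1 hk.2, mul_zero, add_zero]
    · -- i not in {r,s}, hence k may be in {r,s}
      push_neg at hi
      by_cases hk : k = r ∨ k = s
      · have hterm : ∀ j, (if (i = r ∨ i = s) ∧ H r j + H s j = 0 then α * H i j else H i j)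
            * (starRingEnd ℂ) (if (k = r ∨ k = s) ∧ H r j + H s j = 0 then α * H k j else H k j)
            = H i j * (starRingEnd ℂ) (H k j)
              + (if H r j + H s j = 0 then ((starRingEnd ℂ) α - 1)
                  * (H i j * (starRingEnd ℂ) (H k j)) else 0) := by
          intro j
          have hineg : ¬ ((i = r ∨ i = s) ∧ H r j + H s j = 0) := by
            rintro ⟨hi' | hi', _⟩
            · exact hi.1 hi'
            · exact hi.2 hi'
          rw [if_neg hineg]
          by_cases hc : H r j + H s j = 0
          · rw [if_pos ⟨hk, hc⟩, if_pos hc, _root_.map_mul]; ring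
          · rw [if_neg (fun h => hc h.2), if_neg hc, add_zero]
        simp only [hterm]
        rw [Finset.sum_add_distrib, ← Finset.sum_filter, ← Finset.mul_sum, ← hS,
          key2 i k hk hi.1 hi.2, mul_zero, add_zero]
      · push_neg at hk
        apply Finset.sum_congr rfl
        intro j _
        have hineg : ¬ ((i = r ∨ i = s) ∧ H r j + H s j = 0) := by
          rintro ⟨hi' | hi', _⟩
          · exact hi.1 hi'
          · exact hi.2 hi'
        have hkneg : ¬ ((k = r ∨ k = s) ∧ H r j + H s j = 0) := by
          rintro ⟨hk' | hk', _⟩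
          · exact hk.1 hk'
          · exact hk.2 hk'
        rw [if_neg hineg, if_neg hkneg]
end

section
/- Let H be a dephased complex Hadamard matrix with the block structure of the previous theorem and assume additionally b = a (so rows 2 and 3 are [1, a, a, x, y] and [1, a, a, x, −y]). For unimodular α, β, let H(α, β) be obtained by replacing y by α·y and w by α·β·w. Then H(α, β) is a complex Hadamard matrix for all unimodular α, β. -/
open Matrix Complex ComplexConjugate

/-- The block-structured matrix of Theorem `ch1newp`: rows partitioned `1+1+1+r+s`,
columns partitioned `1+1+1+p+q`. -/
def blockH {p q r s : ℕ} (a b : ℂ) (x : Fin p → ℂ) (y : Fin q → ℂ)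
    (z : Fin r → ℂ) (w : Fin s → ℂ)
    (A : Fin r → Fin p → ℂ) (B : Fin r → Fin q → ℂ)
    (C : Fin s → Fin p → ℂ) (D : Fin s → Fin q → ℂ) :
    Matrix (Fin 3 ⊕ (Fin r ⊕ Fin s)) (Fin 3 ⊕ (Fin p ⊕ Fin q)) ℂ :=
  fun i j =>
    match i, j with
    | Sum.inl i0, Sum.inl j0 =>
        if i0 = 0 then 1
        else if i0 = 1 then (if j0 = 0 then 1 else if j0 = 1 then a else b)
        else (if j0 = 0 then 1 else if j0 = 1 then b else a)
    | Sum.inl i0, Sum.inr (Sum.inl jp) => if i0 = 0 then 1 else x jp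
    | Sum.inl i0, Sum.inr (Sum.inr jq) =>
        if i0 = 0 then 1 else if i0 = 1 then y jq else -y jq
    | Sum.inr (Sum.inl ir), Sum.inl j0 => if j0 = 0 then 1 else z ir
    | Sum.inr (Sum.inl ir), Sum.inr (Sum.inl jp) => A ir jp
    | Sum.inr (Sum.inl ir), Sum.inr (Sum.inr jq) => B ir jq
    | Sum.inr (Sum.inr i's), Sum.inl j0 =>
        if j0 = 0 then 1 else if j0 = 1 then w i's else -w i's
    | Sum.inr (Sum.inr i's), Sum.inr (Sum.inl jp) => C i's jp
    | Sum.inr (Sum.inr i's), Sum.inr (Sum.inr jq) => D i's jq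

/-! ### Auxiliary material for the proof -/

/-- The `3 × 3` "mixing" unitary used to reparametrize rows/columns `1` and `2`. -/
noncomputable def mix3 (γ : ℂ) : Matrix (Fin 3) (Fin 3) ℂ := fun i j =>
  if i = 0 then (if j = 0 then 1 else 0)
  else if j = 0 then 0
  else if i = j then (1+γ)/2 else (1-γ)/2

lemma mix3_unitary {γ : ℂ} (h : γ * conj γ = 1) : mix3 γ * (mix3 γ)ᴴ = 1 := by
  ext i j
  fin_cases i <;> fin_cases j <;>
    simp [mix3, Matrix.mul_apply, Fin.sum_univ_three, Matrix.one_apply, map_div₀, map_ofNat] <;>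
    first
    | linear_combination h/2
    | linear_combination -h/2

/-- The big mixing unitary: `mix3 γ` on the first block, identity elsewhere. -/
noncomputable def bigMix (ι : Type) [Fintype ι] [DecidableEq ι] (γ : ℂ) :
    Matrix (Fin 3 ⊕ ι) (Fin 3 ⊕ ι) ℂ :=
  Matrix.fromBlocks (mix3 γ) 0 0 1

lemma bigMix_unitary (ι : Type) [Fintype ι] [DecidableEq ι] {γ : ℂ} (h : γ * conj γ = 1) :
    bigMix ι γ * (bigMix ι γ)ᴴ = 1 := by
  rw [bigMix, Matrix.fromBlocks_conjTranspose, Matrix.fromBlocks_multiply]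
  simp [mix3_unitary h, Matrix.fromBlocks_one]

/-- Top-left block of `blockH a a`. -/
noncomputable def TLb (a : ℂ) : Matrix (Fin 3) (Fin 3) ℂ :=
  fun i j => if i = 0 then 1 else if j = 0 then 1 else a

/-- Top-right block of `blockH`. -/
noncomputable def TRb {p q : ℕ} (x : Fin p → ℂ) (y : Fin q → ℂ) :
    Matrix (Fin 3) (Fin p ⊕ Fin q) ℂ :=
  fun i0 j => match j with
  | .inl jp => if i0 = 0 then 1 else x jp
  | .inr jq => if i0 = 0 then 1 else if i0 = 1 then y jq else -y jq

/-- Bottom-left block of `blockH`. -/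
noncomputable def BLb {r s : ℕ} (z : Fin r → ℂ) (w : Fin s → ℂ) :
    Matrix (Fin r ⊕ Fin s) (Fin 3) ℂ :=
  fun i j0 => match i with
  | .inl ir => if j0 = 0 then 1 else z ir
  | .inr i's => if j0 = 0 then 1 else if j0 = 1 then w i's else -w i's

lemma blockH_eq_fromBlocks {p q r s : ℕ} (a : ℂ) (x : Fin p → ℂ) (y : Fin q → ℂ)
    (z : Fin r → ℂ) (w : Fin s → ℂ)
    (A : Fin r → Fin p → ℂ) (B : Fin r → Fin q → ℂ)
    (C : Fin s → Fin p → ℂ) (D : Fin s → Fin q → ℂ) :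
    blockH a a x y z w A B C D =
      Matrix.fromBlocks (TLb a) (TRb x y) (BLb z w) (Matrix.fromBlocks A B C D) := by
  ext i j
  rcases i with i0 | ir | i's <;> rcases j with j0 | jp | jq <;>
    first
    | rfl
    | (fin_cases i0 <;> fin_cases j0 <;> rfl)

lemma mix_TL (a α γ : ℂ) : mix3 α * TLb a * mix3 γ = TLb a := by
  ext i j
  fin_cases i <;> fin_cases j <;>
    simp [mix3, TLb, Matrix.mul_apply, Fin.sum_univ_three] <;> ring

lemma mix_TR {p q : ℕ} (α : ℂ) (x : Fin p → ℂ) (y : Fin q → ℂ) :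
    mix3 α * TRb x y = TRb x (fun j => α * y j) := by
  ext i j
  fin_cases i <;> rcases j with jp | jq <;>
    simp [mix3, TRb, Matrix.mul_apply, Fin.sum_univ_three] <;> ring

lemma BL_mix {r s : ℕ} (γ : ℂ) (z : Fin r → ℂ) (w : Fin s → ℂ) :
    BLb z w * mix3 γ = BLb z (fun i => γ * w i) := by
  ext i j
  rcases i with ir | i's <;> fin_cases j <;>
    simp [mix3, BLb, Matrix.mul_apply, Fin.sum_univ_three] <;> ring

lemma key_conj {p q r s : ℕ} (a α γ : ℂ) (x : Fin p → ℂ) (y : Fin q → ℂ)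
    (z : Fin r → ℂ) (w : Fin s → ℂ)
    (A : Fin r → Fin p → ℂ) (B : Fin r → Fin q → ℂ)
    (C : Fin s → Fin p → ℂ) (D : Fin s → Fin q → ℂ) :
    bigMix (Fin r ⊕ Fin s) α * blockH a a x y z w A B C D * bigMix (Fin p ⊕ Fin q) γ
      = blockH a a x (fun j => α * y j) z (fun i => γ * w i) A B C D := by
  rw [blockH_eq_fromBlocks, blockH_eq_fromBlocks, bigMix, bigMix,
    Matrix.fromBlocks_multiply, Matrix.fromBlocks_multiply]
  simp only [Matrix.zero_mul, Matrix.mul_zero, Matrix.mul_one, Matrix.one_mul,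
    add_zero, zero_add]
  rw [mix_TL, mix_TR, BL_mix]

lemma unim_conj {u : ℂ} (hu : ‖u‖ = 1) : u * conj u = 1 := by
  rw [Complex.mul_conj]
  norm_cast
  rw [Complex.normSq_eq_norm_sq, hu]; norm_num

/-- The two-parameter family in the case `b = a`: replace `y` by `α • y` and `w` by `α β • w`. -/
theorem blockH_two_param_family {p q r s : ℕ} (hn : r + s = p + q)
    (a : ℂ) (x : Fin p → ℂ) (y : Fin q → ℂ) (z : Fin r → ℂ) (w : Fin s → ℂ)
    (A : Fin r → Fin p → ℂ) (B : Fin r → Fin q → ℂ)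
    (C : Fin s → Fin p → ℂ) (D : Fin s → Fin q → ℂ)
    (ha : ‖a‖ = 1)
    (hx : ∀ i, ‖x i‖ = 1) (hy : ∀ i, ‖y i‖ = 1)
    (hz : ∀ i, ‖z i‖ = 1) (hw : ∀ i, ‖w i‖ = 1)
    (hA : ∀ i j, ‖A i j‖ = 1) (hB : ∀ i j, ‖B i j‖ = 1)
    (hC : ∀ i j, ‖C i j‖ = 1) (hD : ∀ i j, ‖D i j‖ = 1)
    (hHad : blockH a a x y z w A B C D *
        (blockH a a x y z w A B C D).conjTranspose = ((3 + p + q : ℕ) : ℂ) • 1)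
    (α β : ℂ) (hα : ‖α‖ = 1) (hβ : ‖β‖ = 1) :
    (∀ i j, ‖
        (blockH a a x (fun j => α * y j) z (fun i => α * β * w i) A B C D) i j‖ = 1) ∧
      blockH a a x (fun j => α * y j) z (fun i => α * β * w i) A B C D *
        (blockH a a x (fun j => α * y j) z (fun i => α * β * w i) A B C D).conjTranspose
          = ((3 + p + q : ℕ) : ℂ) • 1 := by
  constructor
  · intro i j
    rcases i with i0 | ir | i's <;> rcases j with j0 | jp | jq <;>
      simp only [blockH] <;> (try split_ifs) <;>
      simp [ha, hx, hy, hz, hw, hA, hB, hC, hD, hα, hβ]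
  · have hαβ : ‖α * β‖ = 1 := by rw [norm_mul, hα, hβ, mul_one]
    have hU := bigMix_unitary (Fin r ⊕ Fin s) (unim_conj hα)
    have hV := bigMix_unitary (Fin p ⊕ Fin q) (unim_conj hαβ)
    set U := bigMix (Fin r ⊕ Fin s) α with hUdef
    set V := bigMix (Fin p ⊕ Fin q) (α * β) with hVdef
    set M := blockH a a x y z w A B C D with hMdef
    have hkey : blockH a a x (fun j => α * y j) z (fun i => α * β * w i) A B C D
        = U * M * V := (key_conj a α (α * β) x y z w A B C D).symm
    rw [hkey, Matrix.conjTranspose_mul, Matrix.conjTranspose_mul]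
    calc U * M * V * (Vᴴ * (Mᴴ * Uᴴ))
        = U * (M * (V * (Vᴴ * (Mᴴ * Uᴴ)))) := by
          simp only [Matrix.mul_assoc]
      _ = U * (M * (Mᴴ * Uᴴ)) := by rw [← Matrix.mul_assoc V Vᴴ, hV, Matrix.one_mul]
      _ = U * ((M * Mᴴ) * Uᴴ) := by rw [Matrix.mul_assoc]
      _ = U * ((((3 + p + q : ℕ) : ℂ) • 1) * Uᴴ) := by rw [hMdef]; rw [hHad]
      _ = ((3 + p + q : ℕ) : ℂ) • (U * Uᴴ) := by
          rw [Matrix.smul_mul, Matrix.one_mul, Matrix.mul_smul]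
      _ = ((3 + p + q : ℕ) : ℂ) • 1 := by rw [hU]
end

section
/- Let H be a complex Hadamard matrix of order n with block structure as in the block-parametrization theorem (rows 1–3 and columns partitioned as 1+1+1+p+q, rows [1,a,b,x,y] and [1,b,a,x,−y] with a, b unimodular and all entries of x, y unimodular). Then the orthogonality of rows 2 and 3 forces 1 + a·conj(b) + b·conj(a) + p − q = 0; in particular Re(a·conj(b)) = (q − p − 1)/2 is a half-integer, and since a·conj(b) is unimodular with 2·Re(a·conj(b)) ∈ ℤ, it follows that a·conj(b) ∈ {1, −1, i, −i, ω, ω², −ω, −ω²} where ω = e^{2πi/3}. -/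
set_option maxHeartbeats 1000000


open Complex ComplexConjugate

lemma omega_re : (Complex.exp (2 * Real.pi * Complex.I / 3)).re = -(1/2) := by
  rw [Complex.exp_re]
  have h1 : (2 * Real.pi * Complex.I / 3).re = 0 := by simp
  have h2 : (2 * Real.pi * Complex.I / 3).im = 2 * Real.pi / 3 := by simp
  rw [h1, h2, Real.exp_zero, one_mul]
  have : 2 * Real.pi / 3 = Real.pi - Real.pi / 3 := by ring
  rw [this, Real.cos_pi_sub, Real.cos_pi_div_three]

lemma omega_im : (Complex.exp (2 * Real.pi * Complex.I / 3)).im = Real.sqrt 3 / 2 := by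
  rw [Complex.exp_im]
  have h1 : (2 * Real.pi * Complex.I / 3).re = 0 := by simp
  have h2 : (2 * Real.pi * Complex.I / 3).im = 2 * Real.pi / 3 := by simp
  rw [h1, h2, Real.exp_zero, one_mul]
  have : 2 * Real.pi / 3 = Real.pi - Real.pi / 3 := by ring
  rw [this, Real.sin_pi_sub, Real.sin_pi_div_three]

lemma omega_sq_re : ((Complex.exp (2 * Real.pi * Complex.I / 3)) ^ 2).re = -(1/2) := by
  rw [sq, Complex.mul_re, omega_re, omega_im]
  have h3 : Real.sqrt 3 * Real.sqrt 3 = 3 := Real.mul_self_sqrt (by norm_num)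
  nlinarith [h3]

lemma omega_sq_im : ((Complex.exp (2 * Real.pi * Complex.I / 3)) ^ 2).im = -(Real.sqrt 3 / 2) := by
  rw [sq, Complex.mul_im, omega_re, omega_im]
  ring

/-- Orthogonality of the rows `(1,a,b,x,y)` and `(1,b,a,x,-y)` forces
`1 + a·conj b + b·conj a + p - q = 0`, and hence `a·conj b` is one of the eight listed
roots of unity. -/
theorem ab_restriction {p q : ℕ} (a b : ℂ) (x : Fin p → ℂ) (y : Fin q → ℂ)
    (ha : ‖a‖ = 1) (hb : ‖b‖ = 1)
    (hx : ∀ i, ‖x i‖ = 1) (hy : ∀ j, ‖y j‖ = 1)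
    (horth : 1 + a * conj b + b * conj a
        + (∑ i, x i * conj (x i)) + (∑ j, y j * conj (-(y j))) = 0) :
    1 + a * conj b + b * conj a + (p : ℂ) - (q : ℂ) = 0 ∧
    (a * conj b = 1 ∨ a * conj b = -1 ∨
     a * conj b = Complex.I ∨ a * conj b = -Complex.I ∨
     a * conj b = Complex.exp (2 * Real.pi * Complex.I / 3) ∨
     a * conj b = Complex.exp (2 * Real.pi * Complex.I / 3) ^ 2 ∨
     a * conj b = -Complex.exp (2 * Real.pi * Complex.I / 3) ∨
     a * conj b = -Complex.exp (2 * Real.pi * Complex.I / 3) ^ 2) := by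
  have hxs : (∑ i, x i * conj (x i)) = (p : ℂ) := by
    rw [Finset.sum_congr rfl (fun i _ =>
      (by rw [Complex.mul_conj, Complex.normSq_eq_norm_sq, hx i]; norm_num :
        x i * conj (x i) = 1))]
    simp
  have hys : (∑ j, y j * conj (-(y j))) = -(q : ℂ) := by
    rw [Finset.sum_congr rfl (fun j _ =>
      (by rw [map_neg, mul_neg, Complex.mul_conj, Complex.normSq_eq_norm_sq, hy j]; norm_num :
        y j * conj (-(y j)) = -1))]
    simp
  rw [hxs, hys] at horth
  have heq1 : 1 + a * conj b + b * conj a + (p : ℂ) - (q : ℂ) = 0 := by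
    linear_combination horth
  refine ⟨heq1, ?_⟩
  set z := a * conj b with hzdef
  have hw : b * conj a = conj z := by
    rw [hzdef, map_mul, Complex.conj_conj]; ring
  rw [hw] at heq1
  have hre : (1:ℝ) + z.re + z.re + p - q = 0 := by
    have := congrArg Complex.re heq1
    simpa using this
  have hnsq : z.re * z.re + z.im * z.im = 1 := by
    have h1 : ‖z‖ = 1 := by
      rw [hzdef, norm_mul, Complex.norm_conj, ha, hb]; norm_num
    have h2 := Complex.sq_norm z
    rw [h1, Complex.normSq_apply] at h2
    linarith [h2]
  have hrle : z.re ≤ 1 := by nlinarith [sq_nonneg z.im, sq_nonneg (z.re - 1)]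
  have hrge : -1 ≤ z.re := by nlinarith [sq_nonneg z.im, sq_nonneg (z.re + 1)]
  set n : ℤ := (q : ℤ) - p - 1 with hndef
  have hcast : ((n : ℝ)) = (q : ℝ) - p - 1 := by rw [hndef]; push_cast; ring
  have h2re : 2 * z.re = (n : ℝ) := by rw [hcast]; linarith
  have hn1 : (-2 : ℤ) ≤ n := by
    have : (-2 : ℝ) ≤ (n : ℝ) := by linarith
    exact_mod_cast this
  have hn2 : n ≤ 2 := by
    have : ((n : ℝ)) ≤ 2 := by linarith
    exact_mod_cast this
  have hsqrt3 : Real.sqrt 3 * Real.sqrt 3 = 3 := Real.mul_self_sqrt (by norm_num)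
  interval_cases n
  · -- z.re = -1, z = -1
    have hr : z.re = -1 := by norm_num at h2re; linarith
    have hi : z.im = 0 := by nlinarith [hnsq]
    refine Or.inr (Or.inl ?_)
    apply Complex.ext <;> simp [hr, hi]
  · -- z.re = -1/2, z = ω or ω²
    have hr : z.re = -(1/2) := by norm_num at h2re; linarith
    have hi : (z.im - Real.sqrt 3 / 2) * (z.im + Real.sqrt 3 / 2) = 0 := by
      nlinarith [hnsq, hsqrt3]
    rcases mul_eq_zero.mp hi with h | h
    · refine Or.inr (Or.inr (Or.inr (Or.inr (Or.inl ?_))))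
      apply Complex.ext
      · rw [hr, omega_re]
      · rw [omega_im]; linarith
    · refine Or.inr (Or.inr (Or.inr (Or.inr (Or.inr (Or.inl ?_)))))
      apply Complex.ext
      · rw [hr, omega_sq_re]
      · rw [omega_sq_im]; linarith
  · -- z.re = 0, z = ±I
    have hr : z.re = 0 := by norm_num at h2re; linarith
    have hi : (z.im - 1) * (z.im + 1) = 0 := by nlinarith [hnsq]
    rcases mul_eq_zero.mp hi with h | h
    · refine Or.inr (Or.inr (Or.inl ?_))
      apply Complex.ext <;> simp [hr] <;> linarith
    · refine Or.inr (Or.inr (Or.inr (Or.inl ?_)))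
      apply Complex.ext <;> simp [hr] <;> linarith
  · -- z.re = 1/2, z = -ω² or -ω
    have hr : z.re = 1/2 := by norm_num at h2re; linarith
    have hi : (z.im - Real.sqrt 3 / 2) * (z.im + Real.sqrt 3 / 2) = 0 := by
      nlinarith [hnsq, hsqrt3]
    rcases mul_eq_zero.mp hi with h | h
    · refine Or.inr (Or.inr (Or.inr (Or.inr (Or.inr (Or.inr (Or.inr ?_))))))
      apply Complex.ext
      · rw [Complex.neg_re, hr, omega_sq_re]; norm_num
      · rw [Complex.neg_im, omega_sq_im]; linarith
    · refine Or.inr (Or.inr (Or.inr (Or.inr (Or.inr (Or.inr (Or.inl ?_))))))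
      apply Complex.ext
      · rw [Complex.neg_re, hr, omega_re]; norm_num
      · rw [Complex.neg_im, omega_im]; linarith
  · -- z.re = 1, z = 1
    have hr : z.re = 1 := by norm_num at h2re; linarith
    have hi : z.im = 0 := by nlinarith [hnsq]
    refine Or.inl ?_
    apply Complex.ext <;> simp [hr, hi]
end

section
/- The 10×10 matrix D₁₀(a,b,c) defined below is a complex Hadamard matrix for all unimodular complex numbers a, b, c: its rows are r₀ = (1,1,1,1,1,1,1,1,1,1); r₁ = (1, −1, −i·a·conj(b), −i·a, −i·conj(c), −i, i·conj(c), i·a, i·a·conj(b), i); r₂ = (1, −i·b·conj(a), −1, i·b, i·conj(c), −i, −i·conj(c), −i·b, i, i·b·conj(a)); r₃ = (1, −i·conj(a), i·conj(b), −1, −i, i, −i, i, −i·conj(b), i·conj(a)); r₄ = (1, −i·c, i·c, −i, −1, i, i, −i, i·c, −i·c); r₅ = (1, −i, −i, i, i, −1, i, i, −i, −i); r₆ = (1, i·c, −i·c, −i, i, i, −1, −i, −i·c, i·c); r₇ = (1, i·conj(a), −i·conj(b), i, −i, i, −i, −1, i·conj(b), −i·conj(a)); r₈ = (1, i·b·conj(a),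 i, −i·b, i·conj(c), −i, −i·conj(c), i·b, −1, −i·b·conj(a)); r₉ = (1, i, i·a·conj(b), i·a, −i·conj(c), −i, i·conj(c), −i·a, −i·a·conj(b), −1). -/
open Matrix Complex ComplexConjugate

/-- The three-parameter family `D₁₀⁽³⁾(a,b,c)`. -/
noncomputable def D10 (a b c : ℂ) : Matrix (Fin 10) (Fin 10) ℂ :=
  !![1, 1, 1, 1, 1, 1, 1, 1, 1, 1;
     1, -1, -I*a*conj b, -I*a, -I*conj c, -I, I*conj c, I*a, I*a*conj b, I;
     1, -I*b*conj a, -1, I*b, I*conj c, -I, -I*conj c, -I*b, I, I*b*conj a;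
     1, -I*conj a, I*conj b, -1, -I, I, -I, I, -I*conj b, I*conj a;
     1, -I*c, I*c, -I, -1, I, I, -I, I*c, -I*c;
     1, -I, -I, I, I, -1, I, I, -I, -I;
     1, I*c, -I*c, -I, I, I, -1, -I, -I*c, I*c;
     1, I*conj a, -I*conj b, I, -I, I, -I, -1, I*conj b, -I*conj a;
     1, I*b*conj a, I, -I*b, I*conj c, -I, -I*conj c, I*b, -1, -I*b*conj a;
     1, I, I*a*conj b, I*a, -I*conj c, -I, I*conj c, -I*a, -I*a*conj b, -1]



theorem l10_5 : (5 : Fin 10) = (4 : Fin 9).succ := rfl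
theorem l10_6 : (6 : Fin 10) = (5 : Fin 9).succ := rfl
theorem l10_7 : (7 : Fin 10) = (6 : Fin 9).succ := rfl
theorem l10_8 : (8 : Fin 10) = (7 : Fin 9).succ := rfl
theorem l10_9 : (9 : Fin 10) = (8 : Fin 9).succ := rfl
theorem l9_5 : (5 : Fin 9) = (4 : Fin 8).succ := rfl
theorem l9_6 : (6 : Fin 9) = (5 : Fin 8).succ := rfl
theorem l9_7 : (7 : Fin 9) = (6 : Fin 8).succ := rfl
theorem l9_8 : (8 : Fin 9) = (7 : Fin 8).succ := rfl
theorem l8_5 : (5 : Fin 8) = (4 : Fin 7).succ := rfl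
theorem l8_6 : (6 : Fin 8) = (5 : Fin 7).succ := rfl
theorem l8_7 : (7 : Fin 8) = (6 : Fin 7).succ := rfl
theorem l7_5 : (5 : Fin 7) = (4 : Fin 6).succ := rfl
theorem l7_6 : (6 : Fin 7) = (5 : Fin 6).succ := rfl
theorem l6_5 : (5 : Fin 6) = (4 : Fin 5).succ := rfl

set_option maxHeartbeats 16000000 in
theorem D10_isCHM (a b c : ℂ)
    (ha : ‖a‖ = 1) (hb : ‖b‖ = 1) (hc : ‖c‖ = 1) :
    IsCHM (D10 a b c) := by
  have ha0 : a ≠ 0 := by intro h; simp [h] at ha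
  have hb0 : b ≠ 0 := by intro h; simp [h] at hb
  have hc0 : c ≠ 0 := by intro h; simp [h] at hc
  have hca : conj a = a⁻¹ := by rw [Complex.inv_def, Complex.normSq_eq_norm_sq, ha]; simp
  have hcb : conj b = b⁻¹ := by rw [Complex.inv_def, Complex.normSq_eq_norm_sq, hb]; simp
  have hcc : conj c = c⁻¹ := by rw [Complex.inv_def, Complex.normSq_eq_norm_sq, hc]; simp
  constructor
  · intro i j
    fin_cases i <;> fin_cases j <;>
      simp [D10, l10_5, l10_6, l10_7, l10_8, l10_9, l9_5, l9_6, l9_7, l9_8,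
        l8_5, l8_6, l8_7, l7_5, l7_6, l6_5, Matrix.cons_val_succ,
        Matrix.vecHead, Matrix.vecTail, _root_.map_mul, ha, hb, hc, map_inv₀]
  · ext i j
    fin_cases i <;> fin_cases j <;>
      simp only [Matrix.smul_apply] <;>
      (try rw [Matrix.one_apply_eq]) <;>
      (try rw [Matrix.one_apply_ne (by decide)]) <;>
      simp [Matrix.mul_apply, Matrix.conjTranspose_apply, D10, Fin.sum_univ_succ,
        l10_5, l10_6, l10_7, l10_8, l10_9, l9_5, l9_6, l9_7, l9_8,
        l8_5, l8_6, l8_7, l7_5, l7_6, l6_5, Matrix.cons_val_succ,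
        Matrix.vecHead, Matrix.vecTail,
        _root_.map_mul, Complex.conj_I, map_inv₀, hca, hcb, hcc] <;>
      (try field_simp) <;> (try ring_nf) <;> (try simp [Complex.I_sq]) <;>
      (try field_simp) <;> (try ring) <;> (try field_simp) <;> (try ring)
end

section
/- Setting all parameters to 1 in D₁₀, the resulting matrix D₁₀(1,1,1) is a Butson-type Hadamard matrix BH(4,10): all its entries are fourth roots of unity and D₁₀(1,1,1)·D₁₀(1,1,1)ᴴ = 10·I. -/
open Matrix Complex ComplexConjugate

lemma D10_one_eq : D10 1 1 1 =
  !![1, 1, 1, 1, 1, 1, 1, 1, 1, 1;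
     1, -1, -I, -I, -I, -I, I, I, I, I;
     1, -I, -1, I, I, -I, -I, -I, I, I;
     1, -I, I, -1, -I, I, -I, I, -I, I;
     1, -I, I, -I, -1, I, I, -I, I, -I;
     1, -I, -I, I, I, -1, I, I, -I, -I;
     1, I, -I, -I, I, I, -1, -I, -I, I;
     1, I, -I, I, -I, I, -I, -1, I, -I;
     1, I, I, -I, I, -I, -I, I, -1, -I;
     1, I, I, I, -I, -I, I, -I, -I, -1] := by
  simp [D10]

set_option maxHeartbeats 2000000 in
/-- `D₁₀(1,1,1)` is a Butson-type Hadamard matrix `BH(4,10)`: all entries are fourth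
roots of unity and it is complex Hadamard. -/
theorem D10_one_is_BH4_10 :
    (∀ i j, (D10 1 1 1) i j ^ 4 = 1) ∧ IsCHM (D10 1 1 1) := by
  rw [D10_one_eq]
  refine ⟨?_, ?_, ?_⟩
  · intro i j
    fin_cases i <;> fin_cases j <;>
      simp only [Matrix.cons_val', Matrix.cons_val_zero, Matrix.cons_val_succ', Matrix.empty_val',
        Matrix.cons_val_fin_one, Matrix.cons_val_one, Matrix.head_cons, Matrix.head_fin_const,
        Fin.mk_zero] <;>
      norm_num [neg_pow, Complex.I_pow_four]
  · intro i j
    fin_cases i <;> fin_cases j <;> norm_num [Matrix.cons_val_succ']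
  · ext i j
    fin_cases i <;> fin_cases j <;>
      norm_num [Matrix.mul_apply, Fin.sum_univ_succ, Matrix.one_apply, Matrix.cons_val_succ', Fin.ext_iff] <;> ring_nf
end

section
/- The specific 14×14 matrix L₁₄ over {1, −1, i, −i} given by the explicit entry table below satisfies L₁₄·L₁₄ᴴ = 14·I; hence BH(4,14) matrices exist. Rows (comma-separated, with i the imaginary unit): (1,1,1,1,1,1,1,1,1,1,1,1,1,1); (1,1,1,−1,−1,1,−i,−1,−1,i,−i,−1,i,1); (1,1,i,i,i,−i,1,−i,−1,−i,−1,1,−1,−1); (1,1,i,−i,−i,−i,−1,i,i,−1,1,i,−i,−1); (1,1,−i,1,−1,i,−1,−i,1,1,i,−1,−1,−1); (1,i,−1,−i,−1,−1,−i,i,1,−i,−1,1,i,1); (1,i,−i,i,1,−1,−1,−i,−i,−1,−i,i,1,i); (1,−1,1,1,−1,i,i,i,−1,−i,−i,−i,1,−1); (1,−1,1,−i,i,−1,1,−1,−i,i,i,i,−i,−i); (1,−1,i,−1,1,1,−1,−1,1,1,−1,−i,−i,i); (1,−1,−1,1,i,−i,−1,1,−1,i,1,−i,−1,1); (1,−1,−i,−1,−i,1,i,−i,i,−1,i,1,i,−i);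 (1,−i,−1,i,1,i,1,i,1,−1,−i,−1,−1,−i); (1,−i,−1,−1,−i,−1,1,1,−1,1,i,−1,1,i). -/
open Matrix Complex

/-- The isolated matrix `L₁₄A⁽⁰⁾`, a `BH(4,14)` matrix. -/
noncomputable def L14 : Matrix (Fin 14) (Fin 14) ℂ :=
  !![1, 1, 1, 1, 1, 1, 1, 1, 1, 1, 1, 1, 1, 1;
     1, 1, 1, -1, -1, 1, -I, -1, -1, I, -I, -1, I, 1;
     1, 1, I, I, I, -I, 1, -I, -1, -I, -1, 1, -1, -1;
     1, 1, I, -I, -I, -I, -1, I, I, -1, 1, I, -I, -1;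
     1, 1, -I, 1, -1, I, -1, -I, 1, 1, I, -1, -1, -1;
     1, I, -1, -I, -1, -1, -I, I, 1, -I, -1, 1, I, 1;
     1, I, -I, I, 1, -1, -1, -I, -I, -1, -I, I, 1, I;
     1, -1, 1, 1, -1, I, I, I, -1, -I, -I, -I, 1, -1;
     1, -1, 1, -I, I, -1, 1, -1, -I, I, I, I, -I, -I;
     1, -1, I, -1, 1, 1, -1, -1, 1, 1, -1, -I, -I, I;
     1, -1, -1, 1, I, -I, -1, 1, -1, I, 1, -I, -1, 1;
     1, -1, -I, -1, -I, 1, I, -I, I, -1, I, 1, I, -I;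
     1, -I, -1, I, 1, I, 1, I, 1, -1, -I, -1, -1, -I;
     1, -I, -1, -1, -I, -1, 1, 1, -1, 1, I, -1, 1, I]

/-- The Gaussian-integer avatar of `I`. -/
abbrev gi : GaussianInt := ⟨0, 1⟩

/-- The Gaussian-integer avatar of `L14`. -/
def M14 : Matrix (Fin 14) (Fin 14) GaussianInt :=
  !![1, 1, 1, 1, 1, 1, 1, 1, 1, 1, 1, 1, 1, 1;
     1, 1, 1, -1, -1, 1, -gi, -1, -1, gi, -gi, -1, gi, 1;
     1, 1, gi, gi, gi, -gi, 1, -gi, -1, -gi, -1, 1, -1, -1;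
     1, 1, gi, -gi, -gi, -gi, -1, gi, gi, -1, 1, gi, -gi, -1;
     1, 1, -gi, 1, -1, gi, -1, -gi, 1, 1, gi, -1, -1, -1;
     1, gi, -1, -gi, -1, -1, -gi, gi, 1, -gi, -1, 1, gi, 1;
     1, gi, -gi, gi, 1, -1, -1, -gi, -gi, -1, -gi, gi, 1, gi;
     1, -1, 1, 1, -1, gi, gi, gi, -1, -gi, -gi, -gi, 1, -1;
     1, -1, 1, -gi, gi, -1, 1, -1, -gi, gi, gi, gi, -gi, -gi;
     1, -1, gi, -1, 1, 1, -1, -1, 1, 1, -1, -gi, -gi, gi;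
     1, -1, -1, 1, gi, -gi, -1, 1, -1, gi, 1, -gi, -1, 1;
     1, -1, -gi, -1, -gi, 1, gi, -gi, gi, -1, gi, 1, gi, -gi;
     1, -gi, -1, gi, 1, gi, 1, gi, 1, -1, -gi, -1, -1, -gi;
     1, -gi, -1, -1, -gi, -1, 1, 1, -1, 1, gi, -1, 1, gi]

lemma gi_toComplex : GaussianInt.toComplex gi = I := by
  rw [GaussianInt.toComplex_def']; simp

lemma cons_comp1 {α β : Type*} {n : ℕ} (f : α → β) (a : α) (v : Fin n → α) :
    (fun i => f (Matrix.vecCons a v i)) = Matrix.vecCons (f a) (fun i => f (v i)) :=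
  funext (Fin.cases rfl fun _ => rfl)

lemma cons_comp2 {α β : Type*} {m n : ℕ} (f : α → β) (r : Fin n → α)
    (rs : Fin m → Fin n → α) :
    (fun i j => f (Matrix.vecCons r rs i j))
      = Matrix.vecCons (fun j => f (r j)) (fun i j => f (rs i j)) :=
  funext (Fin.cases rfl fun _ => rfl)

lemma nil_comp1 {α β : Type*} (f : α → β) : (fun i => f (Matrix.vecEmpty i)) = ![] :=
  funext fun i => i.elim0

lemma nil_comp2 {α β : Type*} {n : ℕ} (f : α → β) :
    (fun (i : Fin 0) (j : Fin n) => f ((Matrix.vecEmpty : Fin 0 → Fin n → α) i j)) = ![] :=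
  funext fun i => i.elim0

lemma hmap : L14 = M14.map GaussianInt.toComplex := by
  show L14 = Matrix.of fun i j => GaussianInt.toComplex (M14 i j)
  rw [L14, M14]
  congr 1
  simp only [Matrix.of_apply, cons_comp2, cons_comp1, nil_comp1, nil_comp2,
    _root_.map_one, map_neg, gi_toComplex]

lemma M14_entries : ∀ i j, M14 i j = 1 ∨ M14 i j = -1 ∨ M14 i j = gi ∨ M14 i j = -gi := by
  exact @of_decide_eq_true _ (@Fintype.decidableForallFintype _ _ (fun i => Fintype.decidableForallFintype) _) rfl

lemma M14_prod : M14 * M14.conjTranspose = (14 : GaussianInt) • 1 := by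
  decide

lemma L14_prod : L14 * L14.conjTranspose = (14 : ℂ) • 1 := by
  rw [hmap, ← Matrix.conjTranspose_map _ (fun x => (GaussianInt.toComplex_star x).symm ▸ rfl),
    ← Matrix.map_mul, M14_prod]
  ext i j
  simp only [Matrix.map_apply, Matrix.smul_apply, Matrix.one_apply, smul_eq_mul,
    mul_ite, mul_one, mul_zero]
  split <;> simp [map_ofNat]

/-- `L₁₄` has all entries in `{1, -1, i, -i}` and satisfies `L·Lᴴ = 14·I`;
hence `BH(4,14)` matrices exist. -/
theorem L14_is_BH4_14 :
    ((∀ i j, L14 i j = 1 ∨ L14 i j = -1 ∨ L14 i j = I ∨ L14 i j = -I) ∧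
      L14 * L14.conjTranspose = (14 : ℂ) • 1) ∧
    ∃ H : Matrix (Fin 14) (Fin 14) ℂ,
      (∀ i j, H i j ^ 4 = 1) ∧ H * H.conjTranspose = (14 : ℂ) • 1 := by
  have hent : ∀ i j, L14 i j = 1 ∨ L14 i j = -1 ∨ L14 i j = I ∨ L14 i j = -I := by
    intro i j
    rcases M14_entries i j with h | h | h | h <;>
      rw [hmap, Matrix.map_apply, h] <;>
      simp [gi_toComplex]
  refine ⟨⟨hent, L14_prod⟩, L14, fun i j => ?_, L14_prod⟩
  rcases hent i j with h | h | h | h <;> rw [h] <;> ring_nf <;> simp [Complex.I_sq]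
end

section
/- Diţă doubling: if K is a complex Hadamard matrix of order m and L is a complex Hadamard matrix of order m, and E = diag(e₁,…,e_m) is a diagonal matrix with unimodular entries, then the 2m×2m block matrix [[K, E·L], [K, −E·L]] is a complex Hadamard matrix of order 2m. -/
open Matrix Complex

/-- Diţă doubling: `[[K, E·L], [K, -E·L]]` is a complex Hadamard matrix of order `2m`. -/
theorem dita_doubling {m : ℕ} (K L : Matrix (Fin m) (Fin m) ℂ) (e : Fin m → ℂ)
    (hK : IsCHM K) (hL : IsCHM L) (he : ∀ i, ‖e i‖ = 1) :
    (∀ i j, ‖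
        ((Matrix.fromBlocks K (Matrix.diagonal e * L) K (-(Matrix.diagonal e * L))) i j)‖ = 1) ∧
      Matrix.fromBlocks K (Matrix.diagonal e * L) K (-(Matrix.diagonal e * L)) *
        (Matrix.fromBlocks K (Matrix.diagonal e * L) K
          (-(Matrix.diagonal e * L))).conjTranspose = ((2 * m : ℕ) : ℂ) • 1 := by
  obtain ⟨hK1, hK2⟩ := hK
  obtain ⟨hL1, hL2⟩ := hL
  have hEL : ∀ i j, (Matrix.diagonal e * L) i j = e i * L i j := fun i j => by
    simp [Matrix.diagonal_mul]
  constructor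
  · rintro (i | i) (j | j) <;>
      simp [Matrix.fromBlocks, hEL, _root_.map_mul, hK1, hL1, he]
  · have hM : (Matrix.diagonal e * L) * (Matrix.diagonal e * L).conjTranspose
        = (m : ℂ) • 1 := by
      have hE : Matrix.diagonal e * (Matrix.diagonal e).conjTranspose = 1 := by
        rw [Matrix.diagonal_conjTranspose, Matrix.diagonal_mul_diagonal]
        convert Matrix.diagonal_one using 2
        ext i
        simp only [Pi.mul_apply, Pi.star_apply, Pi.one_apply]
        rw [Complex.star_def, Complex.mul_conj]
        norm_cast
        rw [← Complex.sq_norm, he]; norm_num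
      calc Matrix.diagonal e * L * (Matrix.diagonal e * L).conjTranspose
          = Matrix.diagonal e * (L * L.conjTranspose) * (Matrix.diagonal e).conjTranspose := by
            rw [Matrix.conjTranspose_mul]; noncomm_ring
        _ = (m : ℂ) • (Matrix.diagonal e * (Matrix.diagonal e).conjTranspose) := by
            rw [hL2]; simp [Matrix.mul_smul, Matrix.smul_mul]
        _ = (m : ℂ) • 1 := by rw [hE]
    rw [Matrix.fromBlocks_conjTranspose, Matrix.fromBlocks_multiply]
    rw [Matrix.conjTranspose_neg]
    simp only [Matrix.mul_neg, Matrix.neg_mul, neg_neg, hK2, hM]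
    ext (i | i) (j | j) <;>
      simp [Matrix.one_apply, two_mul, add_smul, nsmul_eq_mul] <;> split <;> ring
end

section
/- Let H(α) = H ∘ EXP(iR·t) be a smooth one-parameter family of complex Hadamard matrices through H = H(0), where R is a fixed real n×n matrix and t ∈ ℝ small. Then R satisfies the linear system Σ_{k=1}^n H_{i,k}·conj(H_{j,k})·(R_{i,k} − R_{j,k}) = 0 for all 1 ≤ i < j ≤ n. -/
open Matrix Complex ComplexConjugate

/-- If `t ↦ H ∘ EXP(i·t·R)` is a family of complex Hadamard matrices for all `t` in a
neighbourhood of `0`, then `R` satisfies the defect linear system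
`∑ₖ H_{i,k}·conj(H_{j,k})·(R_{i,k} − R_{j,k}) = 0` for all `i < j`. -/
theorem defect_linear_system {n : ℕ} (H : Matrix (Fin n) (Fin n) ℂ) (hH : IsCHM H)
    (R : Matrix (Fin n) (Fin n) ℝ) (ε : ℝ) (hε : 0 < ε)
    (hfam : ∀ t : ℝ, |t| < ε →
      IsCHM (fun a b => H a b * Complex.exp (Complex.I * (t : ℂ) * (R a b : ℂ)))) :
    ∀ i j : Fin n, i < j →
      ∑ k, H i k * conj (H j k) * (((R i k : ℝ) : ℂ) - ((R j k : ℝ) : ℂ)) = 0 := by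
  intro i j hij
  set f : ℝ → ℂ := fun t =>
    ∑ k, H i k * conj (H j k) * Complex.exp (Complex.I * (t : ℂ) * (((R i k : ℂ)) - (R j k : ℂ)))
    with hf
  -- f vanishes near 0
  have hzero : ∀ t : ℝ, |t| < ε → f t = 0 := by
    intro t ht
    have h2 := (hfam t ht).2
    have := congrFun (congrFun h2 i) j
    have hne : i ≠ j := ne_of_lt hij
    simp only [Matrix.mul_apply, Matrix.conjTranspose_apply, Matrix.smul_apply,
      Matrix.one_apply_ne hne, smul_zero] at this
    rw [hf]
    rw [← this]
    apply Finset.sum_congr rfl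
    intro k _
    change _ = _ * star (H j k * Complex.exp (Complex.I * (t : ℂ) * (R j k : ℂ)))
    simp only [star_mul', Complex.star_def, _root_.map_mul, ← Complex.exp_conj,
      Complex.conj_I, Complex.conj_ofReal]
    rw [mul_mul_mul_comm, ← Complex.exp_add]
    ring_nf
  have hev : f =ᶠ[nhds (0 : ℝ)] fun _ => (0 : ℂ) := by
    have hmem : Set.Ioo (-ε) ε ∈ nhds (0 : ℝ) := Ioo_mem_nhds (by linarith) hε
    filter_upwards [hmem] with t ht
    exact hzero t (abs_lt.mpr ⟨ht.1, ht.2⟩)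
  have hd0 : HasDerivAt f 0 0 :=
    (hasDerivAt_const (0 : ℝ) (0 : ℂ)).congr_of_eventuallyEq hev
  -- explicit derivative
  have hd : HasDerivAt f
      (∑ k, H i k * conj (H j k) *
        (Complex.exp (Complex.I * (0 : ℝ) * (((R i k : ℂ)) - (R j k : ℂ))) *
          (Complex.I * (((R i k : ℂ)) - (R j k : ℂ))))) 0 := by
    apply HasDerivAt.fun_sum
    intro k _
    set c : ℂ := H i k * conj (H j k)
    set d : ℂ := ((R i k : ℂ)) - (R j k : ℂ)
    have h1 : HasDerivAt (fun z : ℂ => Complex.I * z * d) (Complex.I * d) ((0 : ℝ) : ℂ) := by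
      simpa using ((hasDerivAt_id ((0 : ℝ) : ℂ)).const_mul Complex.I).mul_const d
    have h2 := (h1.cexp.const_mul c).comp_ofReal
    simpa [mul_assoc] using h2
  have heq := hd0.unique hd
  have hI : (∑ k, H i k * conj (H j k) * (((R i k : ℂ)) - (R j k : ℂ))) *
      Complex.I = 0 := by
    have hcongr : (∑ k, H i k * conj (H j k) *
        (Complex.exp (Complex.I * (0 : ℝ) * (((R i k : ℂ)) - (R j k : ℂ))) *
          (Complex.I * (((R i k : ℂ)) - (R j k : ℂ))))) =
        ∑ k, H i k * conj (H j k) * (((R i k : ℂ)) - (R j k : ℂ)) * Complex.I := by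
      apply Finset.sum_congr rfl
      intro k _
      simp
      ring
    rw [Finset.sum_mul, ← hcongr, ← heq]
  rcases mul_eq_zero.mp hI with h | h
  · exact h
  · exact absurd h Complex.I_ne_zero
end

section
/- If a complex Hadamard matrix H of order n has defect zero—i.e., the real solution space of the system Σ_{k=1}^n H_{i,k}·conj(H_{j,k})·(R_{i,k} − R_{j,k}) = 0 (over all 1 ≤ i < j ≤ n) has dimension exactly 2n − 1—then every smooth one-parameter family t ↦ H ∘ EXP(i·t·R) of complex Hadamard matrices through H has R in the span of the trivial solutions R_{a,b} = rₐ + cᵦ (row and column constants); i.e., the family is obtained from H by multiplication with unitary diagonal matrices only. -/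
open Matrix Complex ComplexConjugate

lemma sum_deriv_zero {n : ℕ} (c : Fin n → ℂ) (a : Fin n → ℝ)
    (h : ∀ t : ℝ, ∑ k, c k * Complex.exp (Complex.I * (t : ℂ) * (a k : ℂ)) = 0) :
    ∑ k, c k * (a k : ℂ) = 0 := by
  have hd : HasDerivAt (fun t : ℝ => ∑ k, c k * Complex.exp (Complex.I * (t : ℂ) * (a k : ℂ)))
      (∑ k : Fin n, c k * (Complex.I * (a k : ℂ))) 0 := by
    apply HasDerivAt.fun_sum
    intro k _
    have h0 : HasDerivAt (fun z : ℂ => Complex.I * z * (a k : ℂ)) (Complex.I * (a k : ℂ))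
        ((0 : ℝ) : ℂ) := by
      simpa using ((hasDerivAt_id (((0:ℝ):ℂ))).const_mul Complex.I).mul_const ((a k : ℂ))
    have h1 := (h0.cexp.const_mul (c k)).comp_ofReal
    simpa using h1
  have hz : (fun t : ℝ => ∑ k, c k * Complex.exp (Complex.I * (t : ℂ) * (a k : ℂ)))
      = fun _ => (0 : ℂ) := funext h
  rw [hz] at hd
  have hD : (∑ k : Fin n, c k * (Complex.I * (a k : ℂ))) = 0 :=
    hd.unique (hasDerivAt_const (0 : ℝ) (0 : ℂ))
  have : Complex.I * ∑ k, c k * (a k : ℂ) = 0 := by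
    rw [Finset.mul_sum]
    rw [← hD]
    exact Finset.sum_congr rfl fun k _ => by ring
  rcases mul_eq_zero.1 this with h' | h'
  · exact absurd h' Complex.I_ne_zero
  · exact h'

/-- If `H` has defect zero — every real solution of the defect linear system is a trivial
one, of the form `R_{a,b} = rₐ + c_b` — then any one-parameter family
`t ↦ H ∘ EXP(i·t·R)` of complex Hadamard matrices through `H` comes from a trivial `R`,
i.e. it is obtained from `H` by multiplication with unitary diagonal matrices. -/
theorem defect_zero_isolated {n : ℕ} (H : Matrix (Fin n) (Fin n) ℂ) (hH : IsCHM H)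
    (hdefect : ∀ R : Matrix (Fin n) (Fin n) ℝ,
      (∀ i j : Fin n, i < j →
        ∑ k, H i k * conj (H j k) * (((R i k : ℝ) : ℂ) - ((R j k : ℝ) : ℂ)) = 0) →
      ∃ r c : Fin n → ℝ, ∀ a b, R a b = r a + c b) :
    ∀ R : Matrix (Fin n) (Fin n) ℝ,
      (∀ t : ℝ, IsCHM (fun a b => H a b * Complex.exp (Complex.I * (t : ℂ) * (R a b : ℂ)))) →
      ∃ r c : Fin n → ℝ, (∀ a b, R a b = r a + c b) ∧
        ∀ t : ℝ, (fun a b => H a b * Complex.exp (Complex.I * (t : ℂ) * (R a b : ℂ))) =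
          Matrix.diagonal (fun a => Complex.exp (Complex.I * (t : ℂ) * (r a : ℂ))) * H *
            Matrix.diagonal (fun b => Complex.exp (Complex.I * (t : ℂ) * (c b : ℂ))) := by
  intro R hfam
  have hsys : ∀ i j : Fin n, i < j →
      ∑ k, H i k * conj (H j k) * (((R i k : ℝ) : ℂ) - ((R j k : ℝ) : ℂ)) = 0 := by
    intro i j hij
    have hzero : ∀ t : ℝ, ∑ k, (H i k * conj (H j k)) *
        Complex.exp (Complex.I * (t : ℂ) * ((R i k - R j k : ℝ) : ℂ)) = 0 := by
      intro t
      have h := (hfam t).2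
      have h' := congrFun (congrFun h i) j
      simp only [Matrix.mul_apply, Matrix.conjTranspose_apply, Matrix.smul_apply,
        Matrix.one_apply, hij.ne, if_false, smul_zero] at h'
      rw [← h']
      apply Finset.sum_congr rfl
      intro k _
      have hc : star (H j k * Complex.exp (Complex.I * (t : ℂ) * ((R j k : ℝ) : ℂ)))
          = conj (H j k) * Complex.exp (-(Complex.I * (t : ℂ) * ((R j k : ℝ) : ℂ))) := by
        rw [star_mul']
        congr 1
        rw [Complex.star_def, ← Complex.exp_conj]
        congr 1
        simp [Complex.conj_I]
      show H i k * conj (H j k) * Complex.exp (Complex.I * (t : ℂ) * ((R i k - R j k : ℝ) : ℂ))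
        = H i k * Complex.exp (Complex.I * (t : ℂ) * ((R i k : ℝ) : ℂ))
          * star (H j k * Complex.exp (Complex.I * (t : ℂ) * ((R j k : ℝ) : ℂ)))
      rw [hc]
      push_cast
      rw [show Complex.I * (t : ℂ) * (((R i k : ℝ) : ℂ) - ((R j k : ℝ) : ℂ))
          = Complex.I * (t : ℂ) * ((R i k : ℝ) : ℂ) + -(Complex.I * (t : ℂ) * ((R j k : ℝ) : ℂ))
          by ring, Complex.exp_add]
      ring
    have := sum_deriv_zero (fun k => H i k * conj (H j k)) (fun k => R i k - R j k) hzero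
    rw [← this]
    apply Finset.sum_congr rfl
    intro k _
    push_cast
    ring
  obtain ⟨r, c, hrc⟩ := hdefect R hsys
  refine ⟨r, c, hrc, fun t => ?_⟩
  funext a b
  show H a b * Complex.exp (Complex.I * (t : ℂ) * ((R a b : ℝ) : ℂ)) = _
  rw [Matrix.mul_diagonal, Matrix.diagonal_mul, hrc a b]
  push_cast
  rw [show Complex.I * (t:ℂ) * ((r a : ℂ) + (c b : ℂ))
      = Complex.I * (t:ℂ) * (r a : ℂ) + Complex.I * (t:ℂ) * (c b : ℂ) by ring,
    Complex.exp_add]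
  ring
end
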